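/- Let V be a finite-dimensional vector space over a field K, q an element of K that is not a root of unity, and φ, N linear endomorphisms of V with φ bijective and N∘φ = q·(φ∘N). Then N is nilpotent. -/

import Mathlib

open Polynomial Module

private lemma coeff_comp_C_mul_X {K : Type*} [CommRing K] (p : K[X]) (c : K) (i : ℕ) :
    (p.comp (C c * X)).coeff i = c ^ i * p.coeff i := by
  rw [comp_eq_sum_left, Polynomial.sum_def, finset_sum_coeff]
  have : ∀ e ∈ p.support,
      (C (p.coeff e) * (C c * X) ^ e).coeff i = if i = e then p.coeff e * c ^ e else 0 := by
    intro e _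
    rw [mul_pow, ← C_pow, ← mul_assoc, ← C_mul, coeff_C_mul, coeff_X_pow, mul_ite, mul_one,
      mul_zero]
  rw [Finset.sum_congr rfl this, Finset.sum_ite_eq]
  by_cases hi : i ∈ p.support
  · rw [if_pos hi, mul_comm]
  · rw [if_neg hi, Polynomial.notMem_support_iff.mp hi, mul_zero]

private lemma charpoly_smul_comp {K : Type*} [Field K] {ι : Type*} [DecidableEq ι] [Fintype ι]
    (c : K) (A : Matrix ι ι K) :
    ((c • A).charpoly).comp (C c * X) = C c ^ Fintype.card ι * A.charpoly := by
  have hmap : (Matrix.charmatrix (c • A)).map ⇑(eval₂RingHom C (C c * X) : K[X] →+* K[X])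
      = C c • Matrix.charmatrix A := by
    ext i j
    rw [Matrix.map_apply, Matrix.smul_apply, smul_eq_mul]
    by_cases hij : i = j
    · subst hij
      rw [Matrix.charmatrix_apply_eq, Matrix.charmatrix_apply_eq, Matrix.smul_apply,
        smul_eq_mul, map_sub, coe_eval₂RingHom, eval₂_X, eval₂_C, C_mul]
      ring
    · rw [Matrix.charmatrix_apply_ne _ _ _ hij, Matrix.charmatrix_apply_ne _ _ _ hij,
        Matrix.smul_apply, smul_eq_mul, map_neg, coe_eval₂RingHom, eval₂_C, C_mul]
      ring
  have hdet : (eval₂RingHom C (C c * X) : K[X] →+* K[X]) (c • A).charpoly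
      = ((Matrix.charmatrix (c • A)).map ⇑(eval₂RingHom C (C c * X) : K[X] →+* K[X])).det := by
    rw [Matrix.charpoly, RingHom.map_det, RingHom.mapMatrix_apply]
  rw [show ((c • A).charpoly).comp (C c * X)
      = (eval₂RingHom C (C c * X) : K[X] →+* K[X]) (c • A).charpoly from rfl, hdet, hmap,
    Matrix.det_smul, Matrix.charpoly]

/-- Over a field `K`, if `q ∈ K` is not a root of unity, `V` is a
finite-dimensional `K`-vector space, `φ : V → V` is a bijective linear map, `N : V → V`
is linear, and `N ∘ φ = q • (φ ∘ N)`, then `N` is nilpotent. -/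
theorem stmt3 (K V : Type*) [Field K] [AddCommGroup V] [Module K V] [FiniteDimensional K V]
    (q : K) (hq : ∀ n : ℕ, 1 ≤ n → q ^ n ≠ 1)
    (φ N : V →ₗ[K] V) (hφ : Function.Bijective φ)
    (h : N ∘ₗ φ = q • (φ ∘ₗ N)) :
    IsNilpotent N := by
  rcases eq_or_ne q 0 with rfl | hq0
  · have hN : N = 0 := by
      ext v
      obtain ⟨w, rfl⟩ := hφ.2 v
      simpa using LinearMap.congr_fun h w
    rw [hN]; exact IsNilpotent.zero
  · set e := LinearEquiv.ofBijective φ hφ with he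
    have hconj : e.conj N = q⁻¹ • N := by
      ext v
      obtain ⟨w, rfl⟩ := hφ.2 v
      have hw := LinearMap.congr_fun h w
      simp only [LinearMap.comp_apply, LinearMap.smul_apply] at hw
      have hsw : e.symm (φ w) = w := e.symm_apply_apply w
      simp only [LinearEquiv.conj_apply, LinearMap.comp_apply, LinearEquiv.coe_coe,
        LinearMap.smul_apply, hsw, hw]
      rw [smul_smul, inv_mul_cancel₀ hq0, one_smul]
      rfl
    have hcp : (q⁻¹ • N).charpoly = N.charpoly := by
      rw [← hconj]; exact e.charpoly_conj N
    -- matrix version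
    have b := Module.Free.chooseBasis K V
    have hcard : Fintype.card (Module.Free.ChooseBasisIndex K V) = finrank K V :=
      (Module.finrank_eq_card_chooseBasisIndex K V).symm
    have key : (N.charpoly).comp (C q⁻¹ * X) = C q⁻¹ ^ finrank K V * N.charpoly := by
      have h5 := charpoly_smul_comp q⁻¹ (LinearMap.toMatrix b b N)
      rw [← map_smul, LinearMap.charpoly_toMatrix, LinearMap.charpoly_toMatrix, hcp, hcard] at h5
      exact h5
    set n := finrank K V
    have hcoeff : ∀ i : ℕ, i < n → N.charpoly.coeff i = 0 := by
      intro i hi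
      have h1 : (q⁻¹) ^ i * N.charpoly.coeff i = (q⁻¹) ^ n * N.charpoly.coeff i := by
        have := congrArg (fun p => p.coeff i) key
        simpa only [coeff_comp_C_mul_X, ← C_pow, coeff_C_mul] using this
      set a := N.charpoly.coeff i with ha
      have hqi : q ^ i * q⁻¹ ^ i = 1 := by rw [← mul_pow, mul_inv_cancel₀ hq0, one_pow]
      have hqn : q ^ n * q⁻¹ ^ n = 1 := by rw [← mul_pow, mul_inv_cancel₀ hq0, one_pow]
      have hpow : q ^ (n - i) * q ^ i = q ^ n := by rw [← pow_add, Nat.sub_add_cancel hi.le]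
      have h2 : q ^ (n - i) * a = a := by
        calc q ^ (n - i) * a = q ^ (n - i) * (q ^ i * (q⁻¹ ^ i * a)) := by
              rw [← mul_assoc (q ^ i), hqi, one_mul]
          _ = q ^ n * (q⁻¹ ^ n * a) := by rw [← mul_assoc, hpow, h1]
          _ = a := by rw [← mul_assoc, hqn, one_mul]
      have h3 : (q ^ (n - i) - 1) * a = 0 := by rw [sub_mul, one_mul, h2, sub_self]
      rcases mul_eq_zero.mp h3 with h4 | h4
      · exact absurd (sub_eq_zero.mp h4) (hq (n - i) (by omega))
      · exact h4
    rw [LinearMap.isNilpotent_iff_charpoly]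
    have hdeg : N.charpoly.natDegree = n := LinearMap.charpoly_natDegree N
    ext j
    rcases lt_trichotomy j n with hj | hj | hj
    · rw [hcoeff j hj, coeff_X_pow, if_neg hj.ne]
    · subst hj
      rw [coeff_X_pow, if_pos rfl, ← hdeg]
      exact (LinearMap.charpoly_monic N).coeff_natDegree
    · rw [coeff_X_pow, if_neg hj.ne', coeff_eq_zero_of_natDegree_lt (by rw [hdeg]; exact hj)]
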